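/- arXiv:1901.09931 — 2 statements merged into one kernel-verified Lean document; each statement's English description precedes it below -/
import Mathlib

section
/- Let v be a lower semicontinuous function on the closure of a bounded domain Ω contained in a ball B_d, with v ≥ 0 on ∂Ω and v(x₀) < 0 for some x₀ ∈ Ω. Let ṽ denote the extension of min{v,0} by 0 from Ω to the concentric ball B_{2d}, and let Γ_v be the convex envelope of ṽ on B_{2d}. Define V(x₀) := {q ∈ ℝ^{2n} : v(x₀) + ⟨q, ξ − x₀⟩ < 0 for all ξ ∈ closure(B_{2d})}. Then V(x₀) ⊆ ∂Γ_v({Γ_v = ṽ}), the subgradient image of the contact set. -/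
open Set Metric Filter Topology MeasureTheory

namespace Stmt2

noncomputable section

open Classical

variable {m : ℕ}

/-- The subgradient set of `w` at `x`, relative to the set `S`. -/
def subgradientSet (S : Set (EuclideanSpace ℝ (Fin m)))
    (w : EuclideanSpace ℝ (Fin m) → ℝ) (x : EuclideanSpace ℝ (Fin m)) :
    Set (EuclideanSpace ℝ (Fin m)) :=
  {p | ∀ y ∈ S, w x + (inner ℝ p (y - x) : ℝ) ≤ w y}

/-- The gradient image `∂w(A)` of a set `A`. -/
def gradientImage (S : Set (EuclideanSpace ℝ (Fin m)))
    (w : EuclideanSpace ℝ (Fin m) → ℝ) (A : Set (EuclideanSpace ℝ (Fin m))) :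
    Set (EuclideanSpace ℝ (Fin m)) :=
  ⋃ x ∈ A, subgradientSet S w x

/-- The extension `ṽ` of `min{v,0}` by `0` from `Ω` to the rest of the space. -/
noncomputable def tildeExt (Ω : Set (EuclideanSpace ℝ (Fin m))) (v : EuclideanSpace ℝ (Fin m) → ℝ) :
    EuclideanSpace ℝ (Fin m) → ℝ :=
  fun x => if x ∈ Ω then min (v x) 0 else 0

/-- The convex envelope over the ball `B_{2d}` (centered at the origin):
the pointwise supremum of all affine functions lying below `w` on `B_{2d}`. -/
noncomputable def convexEnvelope (d : ℝ) (w : EuclideanSpace ℝ (Fin m) → ℝ)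
    (x : EuclideanSpace ℝ (Fin m)) : ℝ :=
  sSup {t : ℝ | ∃ p : EuclideanSpace ℝ (Fin m), ∃ c : ℝ,
    (∀ ξ ∈ ball (0 : EuclideanSpace ℝ (Fin m)) (2 * d), c + (inner ℝ p ξ : ℝ) ≤ w ξ) ∧
    t = c + (inner ℝ p x : ℝ)}

/-- The contact set `{Γ_v = ṽ}` inside `B_{2d}`. -/
def contactSet (d : ℝ) (Ω : Set (EuclideanSpace ℝ (Fin m)))
    (v : EuclideanSpace ℝ (Fin m) → ℝ) : Set (EuclideanSpace ℝ (Fin m)) :=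
  {x ∈ ball (0 : EuclideanSpace ℝ (Fin m)) (2 * d) |
    convexEnvelope d (tildeExt Ω v) x = tildeExt Ω v x}

/-- A lower semicontinuous function attains its minimum on a nonempty compact closed set. -/
lemma exists_min_of_lsc {X : Type*} [TopologicalSpace X] {K : Set X} (hK : IsCompact K)
    (hKcl : IsClosed K) (hne : K.Nonempty) {g : X → ℝ} (hg : LowerSemicontinuous g) :
    ∃ x ∈ K, ∀ y ∈ K, g x ≤ g y := by
  haveI : Nonempty K := hne.to_subtype
  set t : K → Set X := fun y => {x ∈ K | g x ≤ g y.1} with ht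
  have htcl : ∀ i, IsClosed (t i) := fun i =>
    hKcl.inter (hg.isClosed_preimage (g i.1))
  have htc : ∀ i, IsCompact (t i) := fun i =>
    hK.of_isClosed_subset (htcl i) (fun x hx => hx.1)
  have htn : ∀ i, (t i).Nonempty := fun i => ⟨i.1, i.2, le_rfl⟩
  have htd : Directed (· ⊇ ·) t := by
    intro a b
    rcases le_total (g a.1) (g b.1) with h | h
    · exact ⟨a, fun x hx => hx, fun x hx => ⟨hx.1, hx.2.trans h⟩⟩
    · exact ⟨b, fun x hx => ⟨hx.1, hx.2.trans h⟩, fun x hx => hx⟩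
  obtain ⟨x, hx⟩ := IsCompact.nonempty_iInter_of_directed_nonempty_isCompact_isClosed
    t htd htn htc htcl
  simp only [mem_iInter] at hx
  obtain ⟨y₀⟩ := (inferInstance : Nonempty K)
  exact ⟨x, (hx y₀).1, fun y hy => (hx ⟨y, hy⟩).2⟩

/-- The extension `ṽ` is lower semicontinuous. -/
lemma tildeExt_lsc (Ω : Set (EuclideanSpace ℝ (Fin m))) (hΩopen : IsOpen Ω)
    (v : EuclideanSpace ℝ (Fin m) → ℝ)
    (hlsc : LowerSemicontinuousOn v (closure Ω))
    (hbdry : ∀ x ∈ frontier Ω, 0 ≤ v x) :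
    LowerSemicontinuous (tildeExt Ω v) := by
  intro x t ht
  by_cases hx : x ∈ closure Ω
  · have hv0 : t < 0 ∧ t < v x := by
      by_cases hxΩ : x ∈ Ω
      · simp only [tildeExt, if_pos hxΩ, lt_min_iff] at ht
        exact ⟨ht.2, ht.1⟩
      · simp only [tildeExt, if_neg hxΩ] at ht
        have hfr : x ∈ frontier Ω := by
          rw [hΩopen.frontier_eq]
          exact ⟨hx, hxΩ⟩
        exact ⟨ht, ht.trans_le (hbdry x hfr)⟩
    have hev := hlsc x hx t hv0.2
    rw [eventually_nhdsWithin_iff] at hev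
    filter_upwards [hev] with y hy
    by_cases hyΩ : y ∈ Ω
    · simp only [tildeExt, if_pos hyΩ]
      exact lt_min (hy (subset_closure hyΩ)) hv0.1
    · simp only [tildeExt, if_neg hyΩ]
      exact hv0.1
  · have hxΩ : x ∉ Ω := fun h => hx (subset_closure h)
    simp only [tildeExt, if_neg hxΩ] at ht
    have hmem : (closure Ω)ᶜ ∈ 𝓝 x := isClosed_closure.isOpen_compl.mem_nhds hx
    filter_upwards [hmem] with y hy
    have hyΩ : y ∉ Ω := fun h => hy (subset_closure h)
    simpa only [tildeExt, if_neg hyΩ] using ht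

/-- `V(x₀) ⊆ ∂Γ_v({Γ_v = ṽ})`. -/
theorem lowerBall_subset_gradientImage_contactSet (n : ℕ) (d : ℝ) (hd : 0 < d)
    (Ω : Set (EuclideanSpace ℝ (Fin (2 * n)))) (hΩopen : IsOpen Ω)
    (hΩconn : IsConnected Ω) (hΩd : Ω ⊆ ball 0 d)
    (v : EuclideanSpace ℝ (Fin (2 * n)) → ℝ)
    (hlsc : LowerSemicontinuousOn v (closure Ω))
    (hbdry : ∀ x ∈ frontier Ω, 0 ≤ v x)
    (x₀ : EuclideanSpace ℝ (Fin (2 * n))) (hx₀ : x₀ ∈ Ω) (hneg : v x₀ < 0) :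
    {q : EuclideanSpace ℝ (Fin (2 * n)) |
        ∀ ξ ∈ closedBall (0 : EuclideanSpace ℝ (Fin (2 * n))) (2 * d),
          v x₀ + (inner ℝ q (ξ - x₀) : ℝ) < 0}
      ⊆ gradientImage (ball 0 (2 * d)) (convexEnvelope d (tildeExt Ω v))
          (contactSet d Ω v) := by
  intro q hq
  set f := tildeExt Ω v with hf
  have hflsc : LowerSemicontinuous f := tildeExt_lsc Ω hΩopen v hlsc hbdry
  -- minimize f ξ - ⟨q, ξ⟩ over the closed ball
  set g : EuclideanSpace ℝ (Fin (2 * n)) → ℝ := fun ξ => f ξ - (inner ℝ q ξ : ℝ) with hg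
  have hglsc : LowerSemicontinuous g := by
    have hc : Continuous (fun ξ : EuclideanSpace ℝ (Fin (2 * n)) => -(inner ℝ q ξ : ℝ)) :=
      (continuous_const.inner continuous_id).neg
    have := hflsc.add hc.lowerSemicontinuous
    simpa [hg, sub_eq_add_neg] using this
  have hKc : IsCompact (closedBall (0 : EuclideanSpace ℝ (Fin (2 * n))) (2 * d)) :=
    isCompact_closedBall 0 (2 * d)
  have hKne : (closedBall (0 : EuclideanSpace ℝ (Fin (2 * n))) (2 * d)).Nonempty :=
    ⟨0, mem_closedBall_self (by linarith)⟩
  obtain ⟨x₁, hx₁K, hx₁min⟩ := exists_min_of_lsc hKc isClosed_closedBall hKne hglsc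
  set c : ℝ := g x₁ with hc
  -- the affine minorant
  have hball_sub : ball (0 : EuclideanSpace ℝ (Fin (2 * n))) (2 * d) ⊆ closedBall 0 (2 * d) :=
    ball_subset_closedBall
  have hl : ∀ ξ ∈ ball (0 : EuclideanSpace ℝ (Fin (2 * n))) (2 * d),
      c + (inner ℝ q ξ : ℝ) ≤ f ξ := by
    intro ξ hξ
    have := hx₁min ξ (hball_sub hξ)
    simp only [hg] at this
    linarith
  -- x₀ lies in the closed ball
  have hx₀cb : x₀ ∈ closedBall (0 : EuclideanSpace ℝ (Fin (2 * n))) (2 * d) :=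
    hball_sub (ball_subset_ball (by linarith) (hΩd hx₀))
  -- f x₁ < 0
  have hfx₁ : f x₁ < 0 := by
    have h1 : g x₁ ≤ g x₀ := hx₁min x₀ hx₀cb
    have hfx₀ : f x₀ = v x₀ := by
      simp [hf, tildeExt, hx₀, min_eq_left hneg.le]
    have h2 : v x₀ + (inner ℝ q (x₁ - x₀) : ℝ) < 0 := hq x₁ hx₁K
    rw [inner_sub_right] at h2
    simp only [hg, hfx₀] at h1
    linarith
  -- hence x₁ ∈ Ω, so x₁ ∈ ball 0 (2d)
  have hx₁Ω : x₁ ∈ Ω := by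
    by_contra h
    simp [hf, tildeExt, h] at hfx₁
  have hx₁ball : x₁ ∈ ball (0 : EuclideanSpace ℝ (Fin (2 * n))) (2 * d) :=
    ball_subset_ball (by linarith) (hΩd hx₁Ω)
  -- the sSup set
  set S : EuclideanSpace ℝ (Fin (2 * n)) → Set ℝ := fun x =>
    {t : ℝ | ∃ p : EuclideanSpace ℝ (Fin (2 * n)), ∃ c' : ℝ,
      (∀ ξ ∈ ball (0 : EuclideanSpace ℝ (Fin (2 * n))) (2 * d), c' + (inner ℝ p ξ : ℝ) ≤ f ξ) ∧
      t = c' + (inner ℝ p x : ℝ)} with hS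
  have hmemS : ∀ x, (c + (inner ℝ q x : ℝ)) ∈ S x := fun x => ⟨q, c, hl, rfl⟩
  have hSbdd : ∀ x ∈ ball (0 : EuclideanSpace ℝ (Fin (2 * n))) (2 * d),
      ∀ t ∈ S x, t ≤ f x := by
    rintro x hx t ⟨p, c', hpc, rfl⟩
    exact hpc x hx
  have hΓ : ∀ x, convexEnvelope d f x = sSup (S x) := fun x => rfl
  -- Γ x₁ = f x₁
  have hcx₁ : c + (inner ℝ q x₁ : ℝ) = f x₁ := by
    simp only [hc, hg]; ring
  have hΓx₁ : convexEnvelope d f x₁ = f x₁ := by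
    rw [hΓ]
    apply le_antisymm
    · exact csSup_le ⟨_, hmemS x₁⟩ (hSbdd x₁ hx₁ball)
    · calc f x₁ = c + (inner ℝ q x₁ : ℝ) := hcx₁.symm
        _ ≤ sSup (S x₁) := le_csSup ⟨f x₁, hSbdd x₁ hx₁ball⟩ (hmemS x₁)
  -- x₁ is in the contact set
  have hcontact : x₁ ∈ contactSet d Ω v := ⟨hx₁ball, hΓx₁⟩
  -- q is a subgradient at x₁
  refine mem_iUnion.mpr ⟨x₁, mem_iUnion.mpr ⟨hcontact, ?_⟩⟩
  intro y hy
  have h1 : convexEnvelope d f x₁ + (inner ℝ q (y - x₁) : ℝ) = c + (inner ℝ q y : ℝ) := by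
    rw [hΓx₁, ← hcx₁, inner_sub_right]; ring
  rw [h1, hΓ]
  exact le_csSup ⟨f y, hSbdd y hy⟩ (hmemS y)

end
end Stmt2
end

section
/- For any positive semidefinite Hermitian-structured real symmetric 2n×2n matrix A (the real Hessian of a convex function), writing H for the associated complex Hessian n×n matrix obtained by H_{jk} = (1/4)(A_{jk} + A_{(n+j)(n+k)} + i(A_{j(n+k)} − A_{(n+j)k})) under the identification ℂⁿ ≅ ℝ^{2n}, one has det(H) ≥ 2^{−n}·√(det A). -/
open Matrix Finset ComplexOrder

namespace Stmt7

/-- The complex `n×n` matrix associated to a real symmetric `2n×2n` matrix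
(indexed by `Fin n ⊕ Fin n`, where `inl` are the `x`-directions and `inr` the
`y`-directions) under the identification `ℂⁿ ≅ ℝ^{2n}`:
`H_{jk} = (1/4)(A_{jk} + A_{(n+j)(n+k)} + i (A_{j(n+k)} - A_{(n+j)k}))`. -/
noncomputable def complexHessianOfReal {n : ℕ} (A : Matrix (Fin n ⊕ Fin n) (Fin n ⊕ Fin n) ℝ) :
    Matrix (Fin n) (Fin n) ℂ :=
  Matrix.of fun j k =>
    (((A (Sum.inl j) (Sum.inl k) + A (Sum.inr j) (Sum.inr k) : ℝ) : ℂ)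
      + Complex.I * ((A (Sum.inl j) (Sum.inr k) - A (Sum.inr j) (Sum.inl k) : ℝ) : ℂ)) / 4

lemma prod_sqrt {m : Type*} [Fintype m] (μ : m → ℝ) (h : ∀ i, 0 ≤ μ i) :
    Real.sqrt (∏ i, μ i) = ∏ i, Real.sqrt (μ i) := by
  have h2 : (∏ i, Real.sqrt (μ i))^2 = ∏ i, μ i := by
    rw [← Finset.prod_pow]
    exact Finset.prod_congr rfl fun i _ => Real.sq_sqrt (h i)
  rw [← h2, Real.sqrt_sq (Finset.prod_nonneg fun i _ => Real.sqrt_nonneg _)]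

lemma amgm_det {m : Type*} [Fintype m] [DecidableEq m] (K : Matrix m m ℝ) (hK : K.PosSemidef) :
    Real.sqrt K.det ≤ ((1/2 : ℝ) • ((1 : Matrix m m ℝ) + K)).det := by
  set μ := hK.1.eigenvalues with hμ
  have hμ0 : ∀ i, 0 ≤ μ i := hK.eigenvalues_nonneg
  set U := (hK.1.eigenvectorUnitary : Matrix m m ℝ) with hU
  have hUU : U * star U = 1 := (Matrix.mem_unitaryGroup_iff).mp hK.1.eigenvectorUnitary.2
  have hspec : K = U * diagonal (RCLike.ofReal ∘ μ) * star U := hK.1.spectral_theorem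
  have hdiag : (RCLike.ofReal ∘ μ : m → ℝ) = μ := by ext i; simp [RCLike.ofReal]
  have h1 : (1/2 : ℝ) • ((1 : Matrix m m ℝ) + K)
      = U * diagonal (fun i => (1 + μ i)/2) * star U := by
    have hd : (1/2 : ℝ) • ((1 : Matrix m m ℝ) + diagonal μ) = diagonal (fun i => (1 + μ i)/2) := by
      ext i j
      by_cases h : i = j <;> simp [Matrix.one_apply, Matrix.diagonal_apply, h]
      ring
    have : (1 : Matrix m m ℝ) + K = U * ((1 : Matrix m m ℝ) + diagonal μ) * star U := by
      rw [Matrix.mul_add, Matrix.add_mul, hspec, hdiag, Matrix.mul_one, hUU]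
    rw [this, ← hd]
    rw [Matrix.mul_smul, Matrix.smul_mul]
  have hdetU : U.det * (star U).det = 1 := by
    rw [← Matrix.det_mul, hUU, Matrix.det_one]
  have h2 : ((1/2 : ℝ) • ((1 : Matrix m m ℝ) + K)).det = ∏ i, (1 + μ i)/2 := by
    rw [h1, Matrix.det_mul, Matrix.det_mul, mul_comm, ← mul_assoc, mul_comm ((star U).det),
      hdetU, one_mul, Matrix.det_diagonal]
  have h3 : K.det = ∏ i, μ i := by
    simpa [hdiag] using hK.1.det_eq_prod_eigenvalues
  rw [h2, h3, prod_sqrt μ hμ0]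
  apply Finset.prod_le_prod
  · intro i _; exact Real.sqrt_nonneg _
  · intro i _
    nlinarith [Real.sq_sqrt (hμ0 i), Real.sqrt_nonneg (μ i), sq_nonneg (1 - Real.sqrt (μ i))]

lemma det_le_det_avg {m : Type*} [Fintype m] [DecidableEq m]
    (X Y : Matrix m m ℝ) (hX : X.PosSemidef) (hY : Y.PosSemidef)
    (hdet : Y.det = X.det) (hne : X.det ≠ 0) :
    X.det ≤ ((1/2 : ℝ) • (X + Y)).det := by
  open scoped MatrixOrder in
  set R := CFC.sqrt X with hRdef
  open scoped MatrixOrder in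
  have hR : R * R = X := CFC.sqrt_mul_sqrt_self X (nonneg_iff_posSemidef.mpr hX)
  open scoped MatrixOrder in
  have hRH : R.IsHermitian := (nonneg_iff_posSemidef.mp (CFC.sqrt_nonneg X)).1
  have hRdet : R.det * R.det = X.det := by rw [← Matrix.det_mul, hR]
  have hRne : R.det ≠ 0 := fun h => hne (by rw [← hRdet, h, mul_zero])
  have hRu : IsUnit R.det := isUnit_iff_ne_zero.mpr hRne
  set K := R⁻¹ * Y * R⁻¹ with hKdef
  have hKpsd : K.PosSemidef := by
    have := hY.conjTranspose_mul_mul_same R⁻¹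
    rwa [Matrix.conjTranspose_nonsing_inv, hRH.eq] at this
  have hKdet : K.det = 1 := by
    rw [hKdef, Matrix.det_mul, Matrix.det_mul, Matrix.det_nonsing_inv, hdet,
      Ring.inverse_eq_inv]
    field_simp
    rw [← hRdet]; ring
  have hXY : X + Y = R * ((1 : Matrix m m ℝ) + K) * R := by
    rw [Matrix.mul_add, Matrix.add_mul, Matrix.mul_one, hR]
    congr 1
    rw [hKdef, Matrix.mul_assoc R⁻¹ Y R⁻¹, Matrix.mul_nonsing_inv_cancel_left _ _ hRu,
      Matrix.nonsing_inv_mul_cancel_right _ _ hRu]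
  have hXpos : 0 < X.det := lt_of_le_of_ne (hRdet ▸ mul_self_nonneg R.det) (Ne.symm hne)
  have key : ((1/2 : ℝ) • (X + Y)).det
      = X.det * ((1/2 : ℝ) • ((1 : Matrix m m ℝ) + K)).det := by
    have : (1/2 : ℝ) • (R * ((1 : Matrix m m ℝ) + K) * R)
        = R * ((1/2 : ℝ) • ((1 : Matrix m m ℝ) + K)) * R := by
      rw [Matrix.mul_smul, Matrix.smul_mul]
    rw [hXY, this, Matrix.det_mul, Matrix.det_mul]
    rw [mul_comm, ← mul_assoc, mul_comm R.det, hRdet]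
  have hd : 1 ≤ ((1/2 : ℝ) • ((1 : Matrix m m ℝ) + K)).det := by
    have := amgm_det K hKpsd
    rwa [hKdet, Real.sqrt_one] at this
  rw [key]
  nlinarith [hd, hXpos]

lemma det_fromBlocks_skew {n : ℕ} (S T : Matrix (Fin n) (Fin n) ℂ) :
    (fromBlocks S T (-T) S).det
      = (S + Complex.I • T).det * (S - Complex.I • T).det := by
  have key : fromBlocks (1 : Matrix (Fin n) (Fin n) ℂ) 0 (-(Complex.I • 1)) 1
        * fromBlocks S T (-T) S
        * fromBlocks (1 : Matrix (Fin n) (Fin n) ℂ) 0 (Complex.I • 1) 1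
      = fromBlocks (S + Complex.I • T) T 0 (S - Complex.I • T) := by
    rw [Matrix.fromBlocks_multiply, Matrix.fromBlocks_multiply]
    rw [Matrix.fromBlocks_inj]
    refine ⟨?_, ?_, ?_, ?_⟩
    · simp [Matrix.mul_smul]
    · simp
    · simp [Matrix.mul_smul, Matrix.smul_mul, smul_smul, Complex.I_mul_I, neg_smul]
    · simp [Matrix.mul_smul, Matrix.smul_mul, sub_eq_add_neg, neg_smul, add_comm]
  have h1 : ((fromBlocks 1 0 (-(Complex.I • 1)) 1 : Matrix (Fin n ⊕ Fin n) (Fin n ⊕ Fin n) ℂ)).det = 1 := by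
    simp [Matrix.det_fromBlocks_zero₁₂]
  have h2 : ((fromBlocks 1 0 (Complex.I • 1) 1 : Matrix (Fin n ⊕ Fin n) (Fin n ⊕ Fin n) ℂ)).det = 1 := by
    simp [Matrix.det_fromBlocks_zero₁₂]
  have h := congrArg Matrix.det key
  rw [Matrix.det_mul, Matrix.det_mul, h1, h2, one_mul, mul_one,
    Matrix.det_fromBlocks_zero₂₁] at h
  exact h

lemma posSemidef_map_ofReal {ι : Type*} [Fintype ι] [DecidableEq ι]
    (A : Matrix ι ι ℝ) (h : A.PosSemidef) :
    (A.map (Complex.ofRealHom)).PosSemidef := by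
  refine .of_dotProduct_mulVec_nonneg ?_ ?_
  · ext i j
    have hAij : A j i = A i j := by simpa using congrFun (congrFun h.1 i) j
    simp [Matrix.conjTranspose_apply, Matrix.map_apply, Complex.conj_ofReal, hAij,
      RCLike.star_def]
  · intro x
    set a : ι → ℝ := fun i => (x i).re with ha
    set b : ι → ℝ := fun i => (x i).im with hb
    set ca : ι → ℂ := fun i => ((a i : ℝ) : ℂ) with hca
    set cb : ι → ℂ := fun i => ((b i : ℝ) : ℂ) with hcb
    have hx : x = ca + Complex.I • cb := by
      funext i
      simp only [hca, hcb, ha, hb, Pi.add_apply, Pi.smul_apply, smul_eq_mul]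
      rw [mul_comm]
      exact (Complex.re_add_im (x i)).symm
    have hstar : star x = ca - Complex.I • cb := by
      funext i
      simp only [Pi.star_apply, hca, hcb, ha, hb, Pi.sub_apply, Pi.smul_apply, smul_eq_mul,
        RCLike.star_def]
      rw [Complex.ext_iff]
      simp
    set Mc := A.map (Complex.ofRealHom) with hMc
    have key : ∀ u v : ι → ℝ, (fun i => ((u i : ℝ) : ℂ)) ⬝ᵥ (Mc *ᵥ fun i => ((v i : ℝ) : ℂ))
        = ((u ⬝ᵥ A *ᵥ v : ℝ) : ℂ) := by
      intro u v
      have h1 : (Complex.ofRealHom ∘ (A *ᵥ v)) = Mc *ᵥ (Complex.ofRealHom ∘ v) := by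
        funext i; exact RingHom.map_mulVec _ _ _ i
      calc (fun i => ((u i : ℝ) : ℂ)) ⬝ᵥ (Mc *ᵥ fun i => ((v i : ℝ) : ℂ))
          = (Complex.ofRealHom ∘ u) ⬝ᵥ (Mc *ᵥ (Complex.ofRealHom ∘ v)) := rfl
        _ = (Complex.ofRealHom ∘ u) ⬝ᵥ (Complex.ofRealHom ∘ (A *ᵥ v)) := by rw [h1]
        _ = Complex.ofRealHom (u ⬝ᵥ (A *ᵥ v)) := (RingHom.map_dotProduct _ _ _).symm
        _ = ((u ⬝ᵥ A *ᵥ v : ℝ) : ℂ) := rfl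
    have hsymmdot : a ⬝ᵥ A *ᵥ b = b ⬝ᵥ A *ᵥ a := by
      have hAt : Aᵀ = A := by
        ext i j
        simpa using congrFun (congrFun h.1 i) j
      rw [Matrix.dotProduct_mulVec a A b, ← Matrix.mulVec_transpose, hAt, dotProduct_comm]
    have expand : star x ⬝ᵥ Mc *ᵥ x
        = ((a ⬝ᵥ A *ᵥ a + b ⬝ᵥ A *ᵥ b : ℝ) : ℂ) := by
      rw [hstar]
      conv_lhs => rw [hx]
      simp only [mulVec_add, mulVec_smul, dotProduct_add, sub_dotProduct,
        dotProduct_smul, smul_dotProduct, smul_eq_mul, key a a, key b b, key a b, key b a]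
      simp only [hca, hcb, key a a, key b b, key a b, key b a]
      rw [hsymmdot]
      push_cast
      ring_nf
      rw [Complex.I_sq]
      ring
    rw [expand, Complex.zero_le_real]
    have h2a := h.dotProduct_mulVec_nonneg a
    have h2b := h.dotProduct_mulVec_nonneg b
    rw [show star a = a from funext fun i => star_trivial _] at h2a
    rw [show star b = b from funext fun i => star_trivial _] at h2b
    exact add_nonneg h2a h2b

lemma hessian_factor {n : ℕ} (A : Matrix (Fin n ⊕ Fin n) (Fin n ⊕ Fin n) ℝ) :
    complexHessianOfReal A
      = (Matrix.of fun (p : Fin n ⊕ Fin n) (k : Fin n) =>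
          Sum.elim (fun j => if j = k then (1/2 : ℂ) else 0)
            (fun j => if j = k then Complex.I/2 else 0) p)ᴴ
        * A.map Complex.ofRealHom
        * (Matrix.of fun (p : Fin n ⊕ Fin n) (k : Fin n) =>
          Sum.elim (fun j => if j = k then (1/2 : ℂ) else 0)
            (fun j => if j = k then Complex.I/2 else 0) p) := by
  ext j k
  rw [Matrix.mul_apply]
  simp only [Matrix.mul_apply, Matrix.conjTranspose_apply, Matrix.of_apply,
    Fintype.sum_sum_type, Sum.elim_inl, Sum.elim_inr, apply_ite (star : ℂ → ℂ), star_zero,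
    Matrix.map_apply, Complex.ofRealHom_eq_coe]
  simp only [ite_mul, zero_mul, mul_ite, mul_zero, Finset.sum_ite_eq, Finset.sum_ite_eq',
    Finset.mem_univ, if_true]
  simp only [complexHessianOfReal, Matrix.of_apply]
  push_cast
  have hsI : star (Complex.I / 2) = -Complex.I/2 := by
    simp [Complex.star_def, Complex.ext_iff]
  rw [hsI]
  have h1 : star (1/2 : ℂ) = 1/2 := by simp [Complex.star_def, Complex.ext_iff]
  rw [h1]
  have : Complex.I * Complex.I = -1 := Complex.I_mul_I
  field_simp
  ring_nf
  rw [Complex.I_sq]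
  ring

variable {n : ℕ}

noncomputable abbrev Jmat (n : ℕ) : Matrix (Fin n ⊕ Fin n) (Fin n ⊕ Fin n) ℝ :=
  fromBlocks 0 (-1) 1 0

lemma Jmat_conjTranspose : (Jmat n)ᴴ = fromBlocks 0 1 (-1) 0 := by
  simp [Jmat, Matrix.fromBlocks_transpose]

lemma Jmat_mul_self : (Jmat n)ᴴ * Jmat n = 1 := by
  rw [Jmat_conjTranspose]
  simp [Jmat, Matrix.fromBlocks_multiply, ← Matrix.fromBlocks_one]

lemma add_conj_blocks (A : Matrix (Fin n ⊕ Fin n) (Fin n ⊕ Fin n) ℝ) :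
    A + (Jmat n)ᴴ * A * Jmat n
      = fromBlocks (A.toBlocks₁₁ + A.toBlocks₂₂) (A.toBlocks₁₂ - A.toBlocks₂₁)
          (-(A.toBlocks₁₂ - A.toBlocks₂₁)) (A.toBlocks₁₁ + A.toBlocks₂₂) := by
  rw [Jmat_conjTranspose]
  conv_lhs => rw [← fromBlocks_toBlocks A]
  rw [Jmat, Matrix.fromBlocks_multiply, Matrix.fromBlocks_multiply, Matrix.fromBlocks_add]
  congr 1 <;> try { simp; try abel }


/-- for a positive semidefinite real symmetric `2n×2n` matrix `A`,
the associated complex Hessian `H` satisfies `det H ≥ 2^{-n} √(det A)`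
(in particular `det H` is real). -/
theorem det_complexHessian_ge (n : ℕ)
    (A : Matrix (Fin n ⊕ Fin n) (Fin n ⊕ Fin n) ℝ)
    (hsymm : A.IsSymm) (hpsd : A.PosSemidef) :
    (complexHessianOfReal A).det.im = 0 ∧
      Real.sqrt A.det / 2 ^ n ≤ (complexHessianOfReal A).det.re := by
  set H := complexHessianOfReal A with hHdef
  have hH : H.PosSemidef := by
    rw [hHdef, hessian_factor A]
    exact (posSemidef_map_ofReal A hpsd).conjTranspose_mul_mul_same _
  set r : ℝ := ∏ i, hH.1.eigenvalues i with hrdef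
  have hr : H.det = (r : ℂ) := by
    rw [hH.1.det_eq_prod_eigenvalues, hrdef]
    push_cast
    rfl
  have hr0 : 0 ≤ r := Finset.prod_nonneg fun i _ => hH.eigenvalues_nonneg i
  refine ⟨by rw [hr, Complex.ofReal_im], ?_⟩
  rw [hr, Complex.ofReal_re]
  -- real determinant of the symmetrized matrix
  set Y := (Jmat n)ᴴ * A * Jmat n with hYdef
  have hY : Y.PosSemidef := hpsd.conjTranspose_mul_mul_same _
  have hJdet : ((Jmat n)ᴴ).det * (Jmat n).det = 1 := by
    rw [← Matrix.det_mul, Jmat_mul_self, Matrix.det_one]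
  have hYdet : Y.det = A.det := by
    rw [hYdef, Matrix.det_mul, Matrix.det_mul]
    linear_combination A.det * hJdet
  set S := (1/2 : ℝ) • (A.toBlocks₁₁ + A.toBlocks₂₂) with hSdef
  set T := (1/2 : ℝ) • (A.toBlocks₁₂ - A.toBlocks₂₁) with hTdef
  have hB : (1/2 : ℝ) • (A + Y) = fromBlocks S T (-T) S := by
    rw [hYdef, add_conj_blocks A, Matrix.fromBlocks_smul, hSdef, hTdef, smul_neg]
  set Sc := S.map Complex.ofRealHom with hScdef
  set Tc := T.map Complex.ofRealHom with hTcdef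
  have hBc : ((1/2 : ℝ) • (A + Y)).map Complex.ofRealHom
      = fromBlocks Sc Tc (-Tc) Sc := by
    have hneg : (-T).map Complex.ofRealHom = -Tc := by
      ext i j; simp [Matrix.map_apply, hTcdef]
    rw [hB, Matrix.fromBlocks_map, hneg]
  have h2H : Sc + Complex.I • Tc = (2 : ℂ) • H := by
    ext j k
    simp only [Matrix.add_apply, Matrix.smul_apply, hScdef, hTcdef, Matrix.map_apply,
      hSdef, hTdef, Matrix.smul_apply, Matrix.add_apply, Matrix.sub_apply,
      Complex.ofRealHom_eq_coe, smul_eq_mul, hHdef, complexHessianOfReal, Matrix.of_apply,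
      Matrix.toBlocks₁₁, Matrix.toBlocks₂₂, Matrix.toBlocks₁₂, Matrix.toBlocks₂₁]
    push_cast
    ring
  have hconj : Sc - Complex.I • Tc = (Sc + Complex.I • Tc).map (starRingEnd ℂ) := by
    ext j k
    simp only [Matrix.sub_apply, Matrix.add_apply, Matrix.smul_apply, Matrix.map_apply,
      hScdef, hTcdef, Complex.ofRealHom_eq_coe, smul_eq_mul, map_add, _root_.map_mul,
      Complex.conj_ofReal, Complex.conj_I]
    push_cast
    ring
  have hdet2H : (Sc + Complex.I • Tc).det = ((2^n * r : ℝ) : ℂ) := by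
    rw [h2H, Matrix.det_smul, hr]
    push_cast
    simp [Fintype.card_fin]
  have hdetB : ((1/2 : ℝ) • (A + Y)).det = (2^n * r)^2 := by
    have h1 : (((1/2 : ℝ) • (A + Y)).det : ℂ) = ((2^n * r)^2 : ℝ) := by
      rw [show (((1/2 : ℝ) • (A + Y)).det : ℂ) = Complex.ofRealHom (((1/2 : ℝ) • (A + Y)).det) from rfl,
        RingHom.map_det, RingHom.mapMatrix_apply, hBc, det_fromBlocks_skew, hconj,
        show ((Sc + Complex.I • Tc).map (starRingEnd ℂ)).det
          = ((starRingEnd ℂ).mapMatrix (Sc + Complex.I • Tc)).det from rfl,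
        ← (starRingEnd ℂ).map_det, hdet2H]
      rw [Complex.conj_ofReal]
      push_cast
      ring
    exact_mod_cast h1
  by_cases h0 : A.det = 0
  · rw [h0, Real.sqrt_zero, zero_div]
    exact hr0
  · have hmink := det_le_det_avg A Y hpsd hY hYdet h0
    rw [hdetB] at hmink
    have h2n : (0:ℝ) < 2^n := by positivity
    have h1 : Real.sqrt A.det ≤ 2^n * r := by
      calc Real.sqrt A.det ≤ Real.sqrt ((2^n * r)^2) := Real.sqrt_le_sqrt hmink
        _ = 2^n * r := Real.sqrt_sq (by positivity)
    rw [div_le_iff₀ h2n]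
    linarith


end Stmt7
end
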